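/- Let G be a group acting transitively on a finite set Ω with |Ω| = n, and let k be an integer with 1 ≤ k ≤ ⌈n/2⌉ − 1. Suppose that for every two disjoint subsets A, B ⊆ Ω with |A| = |B| = k there exists g ∈ G with g • A = B. Then G is k-homogeneous: for every two subsets A, B ⊆ Ω with |A| = |B| = k there exists g ∈ G with g • A = B. -/

import Mathlib

open Pointwise

/-- Let `G` act transitively on a finite set `Ω` with `|Ω| = n`, and let
`1 ≤ k ≤ ⌈n/2⌉ − 1`.  If every pair of disjoint `k`-subsets of `Ω` is related by an
element of `G`, then `G` is `k`-homogeneous: every pair of `k`-subsets is so related. -/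
theorem stmt15 (G : Type*) [Group G] (Ω : Type*) [Fintype Ω] [MulAction G Ω]
    [MulAction.IsPretransitive G Ω] (n k : ℕ) (hn : Fintype.card Ω = n)
    (hk1 : 1 ≤ k) (hk2 : k ≤ (n + 1) / 2 - 1)
    (h : ∀ A B : Set Ω, A.ncard = k → B.ncard = k → Disjoint A B →
      ∃ g : G, g • A = B) :
    ∀ A B : Set Ω, A.ncard = k → B.ncard = k → ∃ g : G, g • A = B := by
  have h2k : 2 * k + 1 ≤ n := by omega
  have key : ∀ d : ℕ, ∀ A B : Set Ω, A.ncard = k → B.ncard = k →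
      (A \ B).ncard ≤ d → ∃ g : G, g • A = B := by
    intro d
    induction d with
    | zero =>
      intro A B hA hB hd
      have hE : A \ B = ∅ := by
        rw [← Set.ncard_eq_zero (Set.toFinite _)]; omega
      have hAB : A ⊆ B := Set.diff_eq_empty.mp hE
      have hEq : A = B := Set.eq_of_subset_of_ncard_le hAB (by rw [hA, hB]) (Set.toFinite _)
      exact ⟨1, by rw [hEq, one_smul]⟩
    | succ d ih =>
      intro A B hA hB hd
      by_cases hcase : (A \ B).ncard ≤ d
      · exact ih A B hA hB hcase
      have hdiff : (A \ B).ncard = d + 1 := by omega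
      obtain ⟨a, ha⟩ : (A \ B).Nonempty := by
        rw [← Set.ncard_pos (Set.toFinite _)]; omega
      obtain ⟨b, hb⟩ : (B \ A).Nonempty := by
        have h1 : (A \ B).ncard + (A ∩ B).ncard = A.ncard := by
          rw [← Set.diff_self_inter]
          exact Set.ncard_diff_add_ncard_of_subset Set.inter_subset_left (Set.toFinite _)
        have h2 : (B \ A).ncard + (A ∩ B).ncard = B.ncard := by
          rw [Set.inter_comm, ← Set.diff_self_inter]
          exact Set.ncard_diff_add_ncard_of_subset Set.inter_subset_left (Set.toFinite _)
        rw [← Set.ncard_pos (Set.toFinite _)]; omega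
      have haA : a ∈ A := ha.1
      have hbA : b ∉ A := hb.2
      set A' : Set Ω := insert b (A \ {a}) with hA'def
      have hA' : A'.ncard = k := by
        rw [hA'def, Set.ncard_insert_of_notMem (by simp [hbA]) (Set.toFinite _),
          Set.ncard_diff_singleton_of_mem haA, hA]
        omega
      have hA'B : (A' \ B).ncard ≤ d := by
        have hEq : A' \ B = (A \ B) \ {a} := by
          rw [hA'def]; ext x
          simp only [Set.mem_diff, Set.mem_insert_iff, Set.mem_singleton_iff]
          have hbB : b ∈ B := hb.1
          constructor
          · rintro ⟨hx1 | ⟨hx1, hx2⟩, hx3⟩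
            · exact absurd (hx1 ▸ hbB) hx3
            · exact ⟨⟨hx1, hx3⟩, hx2⟩
          · rintro ⟨⟨hx1, hx2⟩, hx3⟩; exact ⟨Or.inr ⟨hx1, hx3⟩, hx2⟩
        rw [hEq, Set.ncard_diff_singleton_of_mem ha, hdiff]
        omega
      have hunion : A ∪ A' = insert b A := by
        rw [hA'def]; ext x
        simp only [Set.mem_union, Set.mem_insert_iff, Set.mem_diff, Set.mem_singleton_iff]
        tauto
      have huc : (A ∪ A').ncard = k + 1 := by
        rw [hunion, Set.ncard_insert_of_notMem hbA (Set.toFinite _), hA]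
      have hcompl : k ≤ (A ∪ A')ᶜ.ncard := by
        have hc := Set.ncard_add_ncard_compl (A ∪ A')
        rw [Nat.card_eq_fintype_card, hn] at hc
        omega
      obtain ⟨C, hCsub, hC⟩ := Set.exists_subset_card_eq hcompl
      have hdisj : Disjoint (A ∪ A') C :=
        (Set.disjoint_compl_right_iff_subset.mpr le_rfl).mono_right hCsub
      obtain ⟨g1, hg1⟩ := h A C hA hC (hdisj.mono_left Set.subset_union_left)
      obtain ⟨g2, hg2⟩ := h C A' hC hA'
        (hdisj.mono_left Set.subset_union_right).symm
      obtain ⟨g3, hg3⟩ := ih A' B hA' hB hA'B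
      exact ⟨g3 * g2 * g1, by rw [mul_smul, mul_smul, hg1, hg2, hg3]⟩
  intro A B hA hB
  exact key k A B hA hB
    (le_trans (hA ▸ Set.ncard_le_ncard Set.diff_subset (Set.toFinite _)) le_rfl)
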